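/- Identifiability of the regression coefficient (Proposition 1). Let A, Ã ∈ ℝ^{p×K} and Σ_Z, Σ̃_Z ∈ ℝ^{K×K} be such that both pairs (A, Σ_Z) and (Ã, Σ̃_Z) satisfy Assumption 1, let Γ, Γ̃ be p×p diagonal positive semidefinite matrices, and let β, β̃ ∈ ℝ^K. If A Σ_Z Aᵀ + Γ = Ã Σ̃_Z Ãᵀ + Γ̃ and A Σ_Z β = Ã Σ̃_Z β̃, then there exists a K×K signed permutation matrix P such that Ã = A P, Σ̃_Z = Pᵀ Σ_Z P, and β̃ = Pᵀ β. -/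

import Mathlib

open Matrix

/-- A square real matrix is a *signed permutation matrix* if every row and every column
has exactly one nonzero entry, and each nonzero entry equals `1` or `-1`. -/
def IsSignedPermMatrix {K : ℕ} (P : Matrix (Fin K) (Fin K) ℝ) : Prop :=
  (∀ i, ∃! j, P i j ≠ 0) ∧ (∀ j, ∃! i, P i j ≠ 0) ∧
    ∀ i j, P i j ≠ 0 → P i j = 1 ∨ P i j = -1

/-- Assumption 1 of the paper for a pair `(A, S)`:
(A0) every row of `A` has ℓ1-norm at most 1;
(A1) every column `k` has at least two pure rows, i.e. rows whose entrywise absolute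
value equals the canonical basis vector `e k`;
(A2) `S` is (symmetric) positive definite and satisfies the separation condition. -/
def Assumption1 {p K : ℕ} (A : Matrix (Fin p) (Fin K) ℝ)
    (S : Matrix (Fin K) (Fin K) ℝ) : Prop :=
  (∀ j, ∑ k, |A j k| ≤ 1) ∧
  (∀ k : Fin K, ∃ j l : Fin p, j ≠ l ∧
      (∀ a, |A j a| = if a = k then 1 else 0) ∧
      (∀ a, |A l a| = if a = k then 1 else 0)) ∧
  S.PosDef ∧
  (∃ ν > (0 : ℝ), ∀ a b : Fin K, a < b → min (S a a) (S b b) - |S a b| > ν)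

namespace IdProof


variable {p K : ℕ}

/-- row `j` of `A` is a pure row for column `k` with sign value `s`. -/
def PureRow (A : Matrix (Fin p) (Fin K) ℝ) (j : Fin p) (k : Fin K) (s : ℝ) : Prop :=
  (s = 1 ∨ s = -1) ∧ ∀ a, A j a = if a = k then s else 0

lemma sign_mul_self {s : ℝ} (hs : s = 1 ∨ s = -1) : s * s = 1 := by
  rcases hs with h | h <;> simp [h]

lemma sign_ne_zero {s : ℝ} (hs : s = 1 ∨ s = -1) : s ≠ 0 := by
  rcases hs with h | h <;> simp [h]

lemma sign_abs {s : ℝ} (hs : s = 1 ∨ s = -1) : |s| = 1 := by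
  rcases hs with h | h <;> simp [h]

lemma sign_mul {s t : ℝ} (hs : s = 1 ∨ s = -1) (ht : t = 1 ∨ t = -1) :
    s * t = 1 ∨ s * t = -1 := by
  rcases hs with h | h <;> rcases ht with h' | h' <;> simp [h, h']

lemma PureRow.col_eq {A : Matrix (Fin p) (Fin K) ℝ} {j : Fin p} {k k' : Fin K} {s s' : ℝ}
    (h : PureRow A j k s) (h' : PureRow A j k' s') : k = k' ∧ s = s' := by
  have h1 := h.2 k
  have h2 := h'.2 k
  simp only [if_pos rfl] at h1
  rw [h1] at h2
  by_cases hkk : k = k'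
  · subst hkk; simp at h2; exact ⟨rfl, h2⟩
  · rw [if_neg hkk] at h2
    exact absurd h2 (sign_ne_zero h.1)

lemma pureRow_of_abs {A : Matrix (Fin p) (Fin K) ℝ} {j : Fin p} {k : Fin K}
    (h : ∀ a, |A j a| = if a = k then 1 else 0) : ∃ s, PureRow A j k s := by
  refine ⟨A j k, ?_, ?_⟩
  · have := h k
    simp only [if_pos rfl] at this
    rcases abs_eq (by norm_num : (0:ℝ) ≤ 1) |>.mp this with h1 | h1
    · exact Or.inl h1
    · exact Or.inr h1
  · intro a
    by_cases ha : a = k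
    · subst ha; simp
    · have := h a
      rw [if_neg ha] at this
      rw [if_neg ha]
      exact abs_eq_zero.mp this


variable {K : ℕ}

def bilin (S : Matrix (Fin K) (Fin K) ℝ) (x y : Fin K → ℝ) : ℝ :=
  ∑ a, ∑ b, x a * S a b * y b

lemma bilin_eq_sum_mul (S : Matrix (Fin K) (Fin K) ℝ) (x y : Fin K → ℝ) :
    bilin S x y = ∑ a, x a * (∑ b, S a b * y b) := by
  unfold bilin
  refine Finset.sum_congr rfl fun a _ => ?_
  rw [Finset.mul_sum]
  refine Finset.sum_congr rfl fun b _ => by ring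

lemma bilin_comm (S : Matrix (Fin K) (Fin K) ℝ) (hsymm : ∀ a b, S a b = S b a)
    (x y : Fin K → ℝ) : bilin S x y = bilin S y x := by
  unfold bilin
  rw [Finset.sum_comm]
  refine Finset.sum_congr rfl fun a _ => Finset.sum_congr rfl fun b _ => ?_
  rw [hsymm b a]; ring

/-- Phase 1 bound. -/
lemma bound1 (S : Matrix (Fin K) (Fin K) ℝ) (T : Finset (Fin K)) (μ ν : ℝ)
    (hν : 0 ≤ ν) (hμ0 : 0 ≤ μ) (x y : Fin K → ℝ)
    (hx1 : ∑ a, |x a| ≤ 1) (hy1 : ∑ a, |y a| ≤ 1)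
    (hdiag : ∀ a ∈ T, |S a a| ≤ μ)
    (hoff : ∀ a b, a ≠ b → |S a b| ≤ min (S a a) (S b b) - ν)
    (hinty : ∀ c ∉ T, |∑ b, S c b * y b| ≤ μ - ν) :
    |bilin S x y| ≤ μ - ν * ∑ a ∈ Tᶜ, |x a| := by
  have habs : ∀ a ∈ T, ∀ b, |S a b| ≤ μ := by
    intro a ha b
    by_cases hab : a = b
    · subst hab; exact hdiag a ha
    · calc |S a b| ≤ min (S a a) (S b b) - ν := hoff a b hab
        _ ≤ S a a - 0 := by
            have := min_le_left (S a a) (S b b); linarith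
        _ ≤ |S a a| := by have := le_abs_self (S a a); linarith
        _ ≤ μ := hdiag a ha
  have hwT : ∀ a ∈ T, |∑ b, S a b * y b| ≤ μ := by
    intro a ha
    calc |∑ b, S a b * y b| ≤ ∑ b, |S a b * y b| := Finset.abs_sum_le_sum_abs _ _
      _ ≤ ∑ b, μ * |y b| := by
          refine Finset.sum_le_sum fun b _ => ?_
          rw [abs_mul]
          exact mul_le_mul_of_nonneg_right (habs a ha b) (abs_nonneg _)
      _ = μ * ∑ b, |y b| := by rw [Finset.mul_sum]
      _ ≤ μ * 1 := mul_le_mul_of_nonneg_left hy1 hμ0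
      _ = μ := mul_one μ
  calc |bilin S x y| = |∑ a, x a * (∑ b, S a b * y b)| := by rw [bilin_eq_sum_mul]
    _ ≤ ∑ a, |x a * (∑ b, S a b * y b)| := Finset.abs_sum_le_sum_abs _ _
    _ = ∑ a, |x a| * |∑ b, S a b * y b| := by
        refine Finset.sum_congr rfl fun a _ => abs_mul _ _
    _ = (∑ a ∈ T, |x a| * |∑ b, S a b * y b|) + ∑ a ∈ Tᶜ, |x a| * |∑ b, S a b * y b| :=
        (Finset.sum_add_sum_compl T _).symm
    _ ≤ (∑ a ∈ T, |x a| * μ) + ∑ a ∈ Tᶜ, |x a| * (μ - ν) := by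
        refine add_le_add (Finset.sum_le_sum fun a ha => ?_) (Finset.sum_le_sum fun a ha => ?_)
        · exact mul_le_mul_of_nonneg_left (hwT a ha) (abs_nonneg _)
        · exact mul_le_mul_of_nonneg_left (hinty a (Finset.mem_compl.mp ha)) (abs_nonneg _)
    _ = μ * ((∑ a ∈ T, |x a|) + ∑ a ∈ Tᶜ, |x a|) - ν * ∑ a ∈ Tᶜ, |x a| := by
        rw [← Finset.sum_mul, ← Finset.sum_mul]
        ring
    _ ≤ μ - ν * ∑ a ∈ Tᶜ, |x a| := by
        have h1 : (∑ a ∈ T, |x a|) + ∑ a ∈ Tᶜ, |x a| = ∑ a, |x a| :=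
          Finset.sum_add_sum_compl T _
        rw [h1]
        have : μ * ∑ a, |x a| ≤ μ * 1 := mul_le_mul_of_nonneg_left hx1 hμ0
        linarith



variable {K : ℕ}

/-- Phase 2 bound. -/
lemma bound2 (S : Matrix (Fin K) (Fin K) ℝ) (T : Finset (Fin K)) (μ ν : ℝ)
    (hν : 0 ≤ ν) (hμ0 : 0 ≤ μ) (x y : Fin K → ℝ)
    (hy1 : ∑ a, |y a| ≤ 1)
    (hdiag : ∀ a ∈ T, |S a a| ≤ μ)
    (hoff : ∀ a b, a ≠ b → |S a b| ≤ min (S a a) (S b b) - ν)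
    (hxoff : ∀ a, a ∉ T → x a = 0) :
    |bilin S x y| ≤ μ * (∑ a, |x a|) - ν * ∑ a, |x a| * ((∑ b, |y b|) - |y a|) := by
  have hX0 : (0:ℝ) ≤ ∑ a, |x a| := Finset.sum_nonneg fun a _ => abs_nonneg _
  have key : ∀ a, |x a| * |∑ b, S a b * y b| ≤
      |x a| * (μ * (∑ b, |y b|) - ν * ((∑ b, |y b|) - |y a|)) := by
    intro a
    by_cases ha : a ∈ T
    · refine mul_le_mul_of_nonneg_left ?_ (abs_nonneg _)
      calc |∑ b, S a b * y b| ≤ ∑ b, |S a b| * |y b| := by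
            refine le_trans (Finset.abs_sum_le_sum_abs _ _)
              (le_of_eq (Finset.sum_congr rfl fun b _ => abs_mul _ _))
        _ = |S a a| * |y a| + ∑ b ∈ Finset.univ.erase a, |S a b| * |y b| := by
            rw [← Finset.add_sum_erase _ _ (Finset.mem_univ a)]
        _ ≤ μ * |y a| + ∑ b ∈ Finset.univ.erase a, (μ - ν) * |y b| := by
            refine add_le_add (mul_le_mul_of_nonneg_right (hdiag a ha) (abs_nonneg _))
              (Finset.sum_le_sum fun b hb => ?_)
            have hba : a ≠ b := fun h => (Finset.mem_erase.mp hb).1 h.symm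
            refine mul_le_mul_of_nonneg_right ?_ (abs_nonneg _)
            calc |S a b| ≤ min (S a a) (S b b) - ν := hoff a b hba
              _ ≤ |S a a| - ν := by
                  have h1 := min_le_left (S a a) (S b b)
                  have h2 := le_abs_self (S a a); linarith
              _ ≤ μ - ν := by have := hdiag a ha; linarith
        _ = μ * (∑ b, |y b|) - ν * ((∑ b, |y b|) - |y a|) := by
            rw [← Finset.mul_sum, Finset.sum_erase_eq_sub (Finset.mem_univ a)]
            ring
    · rw [hxoff a ha]; simp
  calc |bilin S x y| = |∑ a, x a * (∑ b, S a b * y b)| := by rw [bilin_eq_sum_mul]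
    _ ≤ ∑ a, |x a * (∑ b, S a b * y b)| := Finset.abs_sum_le_sum_abs _ _
    _ = ∑ a, |x a| * |∑ b, S a b * y b| :=
        Finset.sum_congr rfl fun a _ => abs_mul _ _
    _ ≤ ∑ a, |x a| * (μ * (∑ b, |y b|) - ν * ((∑ b, |y b|) - |y a|)) :=
        Finset.sum_le_sum fun a _ => key a
    _ = μ * (∑ b, |y b|) * (∑ a, |x a|) - ν * ∑ a, |x a| * ((∑ b, |y b|) - |y a|) := by
        rw [Finset.sum_congr rfl (fun a _ =>
          (by ring : |x a| * (μ * (∑ b, |y b|) - ν * ((∑ b, |y b|) - |y a|)) =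
            μ * (∑ b, |y b|) * |x a| - ν * (|x a| * ((∑ b, |y b|) - |y a|)))),
          Finset.sum_sub_distrib, ← Finset.mul_sum, ← Finset.mul_sum]
    _ ≤ μ * (∑ a, |x a|) - ν * ∑ a, |x a| * ((∑ b, |y b|) - |y a|) := by
        have : μ * (∑ b, |y b|) * (∑ a, |x a|) ≤ μ * 1 * (∑ a, |x a|) := by
          refine mul_le_mul_of_nonneg_right ?_ hX0
          exact mul_le_mul_of_nonneg_left hy1 hμ0
        linarith



variable {K : ℕ}

lemma equality_analysis (S : Matrix (Fin K) (Fin K) ℝ) (hsymm : ∀ a b, S a b = S b a)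
    (T : Finset (Fin K)) (μ ν : ℝ) (hν : 0 < ν) (hμ : 0 < μ)
    (x y : Fin K → ℝ) (hx1 : ∑ a, |x a| ≤ 1) (hy1 : ∑ a, |y a| ≤ 1)
    (hdiag : ∀ a ∈ T, |S a a| ≤ μ)
    (hoff : ∀ a b, a ≠ b → |S a b| ≤ min (S a a) (S b b) - ν)
    (hintx : ∀ c, c ∉ T → |∑ b, S c b * x b| ≤ μ - ν)
    (hinty : ∀ c, c ∉ T → |∑ b, S c b * y b| ≤ μ - ν)
    (hq : |bilin S x y| = μ) :
    ∃ c, c ∈ T ∧ |S c c| = μ ∧ |x c| = 1 ∧ |y c| = 1 ∧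
      (∀ a, a ≠ c → x a = 0) ∧ (∀ a, a ≠ c → y a = 0) := by
  have hq' : |bilin S y x| = μ := by rw [bilin_comm S hsymm y x, hq]
  -- Phase 1: supports inside T
  have hxsupp : ∀ a, a ∉ T → x a = 0 := by
    have hb := bound1 S T μ ν hν.le hμ.le x y hx1 hy1 hdiag hoff
      (fun c hc => hinty c hc)
    rw [hq] at hb
    have hs0 : (0:ℝ) ≤ ∑ a ∈ Tᶜ, |x a| := Finset.sum_nonneg fun a _ => abs_nonneg _
    have hs : ∑ a ∈ Tᶜ, |x a| = 0 := by nlinarith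
    intro a ha
    have := (Finset.sum_eq_zero_iff_of_nonneg (fun a _ => abs_nonneg (x a))).mp hs a
      (Finset.mem_compl.mpr ha)
    exact abs_eq_zero.mp this
  have hysupp : ∀ a, a ∉ T → y a = 0 := by
    have hb := bound1 S T μ ν hν.le hμ.le y x hy1 hx1 hdiag hoff
      (fun c hc => hintx c hc)
    rw [hq'] at hb
    have hs0 : (0:ℝ) ≤ ∑ a ∈ Tᶜ, |y a| := Finset.sum_nonneg fun a _ => abs_nonneg _
    have hs : ∑ a ∈ Tᶜ, |y a| = 0 := by nlinarith
    intro a ha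
    have := (Finset.sum_eq_zero_iff_of_nonneg (fun a _ => abs_nonneg (y a))).mp hs a
      (Finset.mem_compl.mpr ha)
    exact abs_eq_zero.mp this
  -- Phase 2
  have hb2x := bound2 S T μ ν hν.le hμ.le x y hy1 hdiag hoff hxsupp
  have hb2y := bound2 S T μ ν hν.le hμ.le y x hx1 hdiag hoff hysupp
  rw [hq] at hb2x
  rw [hq'] at hb2y
  have hX0 : (0:ℝ) ≤ ∑ a, |x a| := Finset.sum_nonneg fun a _ => abs_nonneg _
  have hY0 : (0:ℝ) ≤ ∑ a, |y a| := Finset.sum_nonneg fun a _ => abs_nonneg _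
  have hYa : ∀ a, |y a| ≤ ∑ b, |y b| := fun a =>
    Finset.single_le_sum (fun b _ => abs_nonneg (y b)) (Finset.mem_univ a)
  have hXa : ∀ a, |x a| ≤ ∑ b, |x b| := fun a =>
    Finset.single_le_sum (fun b _ => abs_nonneg (x b)) (Finset.mem_univ a)
  have hZxy0 : (0:ℝ) ≤ ∑ a, |x a| * ((∑ b, |y b|) - |y a|) :=
    Finset.sum_nonneg fun a _ => mul_nonneg (abs_nonneg _) (by have := hYa a; linarith)
  have hZyx0 : (0:ℝ) ≤ ∑ a, |y a| * ((∑ b, |x b|) - |x a|) :=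
    Finset.sum_nonneg fun a _ => mul_nonneg (abs_nonneg _) (by have := hXa a; linarith)
  have hX1 : ∑ a, |x a| = 1 := by nlinarith
  have hY1 : ∑ a, |y a| = 1 := by nlinarith
  have hZxy : ∑ a, |x a| * ((∑ b, |y b|) - |y a|) = 0 := by nlinarith
  have hZyx : ∑ a, |y a| * ((∑ b, |x b|) - |x a|) = 0 := by nlinarith
  have hZxy' := (Finset.sum_eq_zero_iff_of_nonneg
    (fun a _ => mul_nonneg (abs_nonneg (x a)) (by have := hYa a; linarith))).mp hZxy
  have hZyx' := (Finset.sum_eq_zero_iff_of_nonneg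
    (fun a _ => mul_nonneg (abs_nonneg (y a)) (by have := hXa a; linarith))).mp hZyx
  -- find the coordinate
  have hex : ∃ c, x c ≠ 0 := by
    by_contra h
    push_neg at h
    rw [Finset.sum_congr rfl (fun a _ => by rw [h a, abs_zero])] at hX1
    simp at hX1
  obtain ⟨c, hc⟩ := hex
  have hxc0 : 0 < |x c| := abs_pos.mpr hc
  have hyc1 : |y c| = 1 := by
    have h1 := hZxy' c (Finset.mem_univ c)
    have h2 : (∑ b, |y b|) - |y c| = 0 := by
      rcases mul_eq_zero.mp h1 with h | h
      · exact absurd h (ne_of_gt hxc0)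
      · exact h
    rw [hY1] at h2; linarith
  have hyc : y c ≠ 0 := fun h => by rw [h, abs_zero] at hyc1; norm_num at hyc1
  have hxc1 : |x c| = 1 := by
    have h1 := hZyx' c (Finset.mem_univ c)
    have h2 : (∑ b, |x b|) - |x c| = 0 := by
      rcases mul_eq_zero.mp h1 with h | h
      · exact absurd h (abs_ne_zero.mpr hyc)
      · exact h
    rw [hX1] at h2; linarith
  -- singleton supports
  have hxsingle : ∀ a, a ≠ c → x a = 0 := by
    intro a ha
    have h1 : ∑ b ∈ Finset.univ.erase c, |x b| = 0 := by
      rw [Finset.sum_erase_eq_sub (Finset.mem_univ c), hX1, hxc1]; ring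
    have := (Finset.sum_eq_zero_iff_of_nonneg (fun b _ => abs_nonneg (x b))).mp h1 a
      (Finset.mem_erase.mpr ⟨ha, Finset.mem_univ a⟩)
    exact abs_eq_zero.mp this
  have hysingle : ∀ a, a ≠ c → y a = 0 := by
    intro a ha
    have h1 : ∑ b ∈ Finset.univ.erase c, |y b| = 0 := by
      rw [Finset.sum_erase_eq_sub (Finset.mem_univ c), hY1, hyc1]; ring
    have := (Finset.sum_eq_zero_iff_of_nonneg (fun b _ => abs_nonneg (y b))).mp h1 a
      (Finset.mem_erase.mpr ⟨ha, Finset.mem_univ a⟩)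
    exact abs_eq_zero.mp this
  have hcT : c ∈ T := by
    by_contra h
    exact hc (hxsupp c h)
  -- value of the bilinear form
  have hval : bilin S x y = x c * S c c * y c := by
    unfold bilin
    rw [Finset.sum_eq_single c]
    · rw [Finset.sum_eq_single c]
      · intro b _ hb; rw [hysingle b hb]; ring
      · intro h; exact absurd (Finset.mem_univ c) h
    · intro a _ ha
      rw [hxsingle a ha]
      simp
    · intro h; exact absurd (Finset.mem_univ c) h
  have hScc : |S c c| = μ := by
    rw [hval] at hq
    rw [abs_mul, abs_mul, hxc1, hyc1] at hq
    rw [← hq]; ring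
  exact ⟨c, hcT, hScc, hxc1, hyc1, hxsingle, hysingle⟩



variable {p K : ℕ}

lemma bilin_pure_left {A : Matrix (Fin p) (Fin K) ℝ} {S : Matrix (Fin K) (Fin K) ℝ}
    {i : Fin p} {c : Fin K} {s : ℝ} (hi : PureRow A i c s) (x : Fin K → ℝ) :
    bilin S (A i) x = s * ∑ b, S c b * x b := by
  unfold bilin
  rw [Finset.mul_sum, Finset.sum_eq_single c]
  · refine Finset.sum_congr rfl fun b _ => ?_
    rw [hi.2 c, if_pos rfl]; ring
  · intro a _ ha
    rw [Finset.sum_eq_zero]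
    intro b _
    rw [hi.2 a, if_neg ha]; ring
  · intro h; exact absurd (Finset.mem_univ c) h

lemma bilin_pure_pure {A : Matrix (Fin p) (Fin K) ℝ} {S : Matrix (Fin K) (Fin K) ℝ}
    {j l : Fin p} {k k' : Fin K} {s s' : ℝ}
    (hj : PureRow A j k s) (hl : PureRow A l k' s') :
    bilin S (A j) (A l) = s * s' * S k k' := by
  rw [bilin_pure_left hj, Finset.sum_eq_single k']
  · rw [hl.2 k', if_pos rfl]; ring
  · intro b _ hb; rw [hl.2 b, if_neg hb]; ring
  · intro h; exact absurd (Finset.mem_univ k') h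

lemma step (A At : Matrix (Fin p) (Fin K) ℝ) (S St : Matrix (Fin K) (Fin K) ℝ)
    (T T' : Finset (Fin K)) (ν μ : ℝ) (hν : 0 < ν) (hμ : 0 < μ)
    (hSt_sym : ∀ a b, St a b = St b a)
    (hS_off : ∀ a b, a ≠ b → |S a b| ≤ min (S a a) (S b b) - ν)
    (hSt_off : ∀ a b, a ≠ b → |St a b| ≤ min (St a a) (St b b) - ν)
    (hSt_diag : ∀ a, 0 < St a a)
    (hAt_l1 : ∀ j, ∑ c, |At j c| ≤ 1)
    (hA_pure : ∀ k : Fin K, ∃ j l : Fin p, j ≠ l ∧ (∃ s, PureRow A j k s) ∧ (∃ s, PureRow A l k s))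
    (hq : ∀ j l : Fin p, j ≠ l → bilin S (A j) (A l) = bilin St (At j) (At l))
    (hM : ∀ c, c ∉ T' → ∃ i : Fin p, ∃ k', k' ∉ T ∧ (∃ s, PureRow A i k' s) ∧ (∃ s, PureRow At i c s))
    (k : Fin K) (hk : k ∈ T) (hkk : S k k = μ)
    (hμT' : ∀ c ∈ T', St c c ≤ μ) :
    ∃ c, c ∈ T' ∧ St c c = μ ∧ ∃ e, (e = 1 ∨ e = -1) ∧
      ∀ j s, PureRow A j k s → PureRow At j c (e * s) := by
  -- interaction bound for any row pure at `k`
  have hint : ∀ j₁ s₁, PureRow A j₁ k s₁ → ∀ c', c' ∉ T' →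
      |∑ b, St c' b * At j₁ b| ≤ μ - ν := by
    intro j₁ s₁ hj₁ c' hc'
    obtain ⟨i, k', hk'T, ⟨s'', hiA⟩, ⟨s', hiAt⟩⟩ := hM c' hc'
    have hkk' : k' ≠ k := fun h => hk'T (h ▸ hk)
    have hij : i ≠ j₁ := by
      intro h
      subst h
      exact hkk' (hiA.col_eq hj₁).1
    have h1 : bilin St (At i) (At j₁) = s' * ∑ b, St c' b * At j₁ b :=
      bilin_pure_left hiAt _
    have h2 : bilin S (A i) (A j₁) = s'' * s₁ * S k' k := bilin_pure_pure hiA hj₁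
    have h3 := hq i j₁ hij
    have h4 : |∑ b, St c' b * At j₁ b| = |S k' k| := by
      have : s' * ∑ b, St c' b * At j₁ b = s'' * s₁ * S k' k := by rw [← h1, ← h2, h3]
      have habs := congrArg abs this
      rw [abs_mul, abs_mul, abs_mul, sign_abs hiAt.1, sign_abs hiA.1, sign_abs hj₁.1] at habs
      simpa using habs
    rw [h4]
    calc |S k' k| ≤ min (S k' k') (S k k) - ν := hS_off k' k hkk'
      _ ≤ S k k - ν := by have := min_le_right (S k' k') (S k k); linarith
      _ = μ - ν := by rw [hkk]
  obtain ⟨j, l, hjl, ⟨s1, hj⟩, ⟨s2, hl⟩⟩ := hA_pure k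
  have hqv : |bilin St (At j) (At l)| = μ := by
    rw [← hq j l hjl, bilin_pure_pure hj hl, hkk]
    rw [abs_mul, abs_mul, sign_abs hj.1, sign_abs hl.1, abs_of_pos hμ]
    ring
  have hdiagT' : ∀ a ∈ T', |St a a| ≤ μ := fun a ha => by
    rw [abs_of_pos (hSt_diag a)]; exact hμT' a ha
  obtain ⟨c, hcT', hScc, hxc1, hyc1, hxsingle, hysingle⟩ :=
    equality_analysis St hSt_sym T' μ ν hν hμ (At j) (At l) (hAt_l1 j) (hAt_l1 l)
      hdiagT' hSt_off (fun c' hc' => hint j s1 hj c' hc') (fun c' hc' => hint l s2 hl c' hc')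
      hqv
  have hSccμ : St c c = μ := by
    rw [abs_of_pos (hSt_diag c)] at hScc; exact hScc
  have ht : At j c = 1 ∨ At j c = -1 := by
    rcases (abs_eq (by norm_num : (0:ℝ) ≤ 1)).mp hxc1 with h | h
    · exact Or.inl h
    · exact Or.inr h
  have hpurej : PureRow At j c (At j c) := by
    refine ⟨ht, fun a => ?_⟩
    by_cases ha : a = c
    · subst ha; simp
    · rw [if_neg ha]; exact hxsingle a ha
  refine ⟨c, hcT', hSccμ, At j c * s1, sign_mul ht hj.1, ?_⟩
  intro j₁ s₁ hj₁
  by_cases hjj : j₁ = j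
  · have hs : s₁ = s1 := by
      rw [hjj] at hj₁; exact (hj₁.col_eq hj).2
    rw [hjj, hs, mul_assoc, sign_mul_self hj.1, mul_one]
    exact hpurej
  · -- apply equality analysis to the pair (j₁, j)
    have hqv' : |bilin St (At j₁) (At j)| = μ := by
      rw [← hq j₁ j hjj, bilin_pure_pure hj₁ hj, hkk]
      rw [abs_mul, abs_mul, sign_abs hj₁.1, sign_abs hj.1, abs_of_pos hμ]
      ring
    obtain ⟨c₂, hc₂T', hScc₂, hx₁c2, hyc2, hx₁single, hjsingle⟩ :=
      equality_analysis St hSt_sym T' μ ν hν hμ (At j₁) (At j) (hAt_l1 j₁) (hAt_l1 j)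
        hdiagT' hSt_off (fun c' hc' => hint j₁ s₁ hj₁ c' hc') (fun c' hc' => hint j s1 hj c' hc')
        hqv'
    have hc2c : c₂ = c := by
      by_contra h
      have := hjsingle c (fun hcc => h hcc.symm)
      rw [this, abs_zero] at hxc1
      norm_num at hxc1
    subst hc2c
    have ht₁ : At j₁ c₂ = 1 ∨ At j₁ c₂ = -1 := by
      rcases (abs_eq (by norm_num : (0:ℝ) ≤ 1)).mp hx₁c2 with h | h
      · exact Or.inl h
      · exact Or.inr h
    have hpure₁ : PureRow At j₁ c₂ (At j₁ c₂) := by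
      refine ⟨ht₁, fun a => ?_⟩
      by_cases ha : a = c₂
      · subst ha; simp
      · rw [if_neg ha]; exact hx₁single a ha
    -- sign bookkeeping
    have hb1 : bilin St (At j₁) (At j) = At j₁ c₂ * At j c₂ * St c₂ c₂ :=
      bilin_pure_pure hpure₁ hpurej
    have hb2 : bilin S (A j₁) (A j) = s₁ * s1 * S k k := bilin_pure_pure hj₁ hj
    have heq : At j₁ c₂ * At j c₂ * μ = s₁ * s1 * μ := by
      have h6 := hq j₁ j hjj
      rw [hb2, hb1, hSccμ, hkk] at h6
      linarith
    have heq2 : At j₁ c₂ * At j c₂ = s₁ * s1 :=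
      mul_right_cancel₀ (ne_of_gt hμ) heq
    have ht₁val : At j₁ c₂ = At j c₂ * s1 * s₁ := by
      have h5 : At j₁ c₂ * (At j c₂ * At j c₂) = s₁ * s1 * At j c₂ := by
        rw [← mul_assoc, heq2]
      rw [sign_mul_self ht, mul_one] at h5
      rw [h5]; ring
    rw [← ht₁val]
    exact hpure₁




variable {p K : ℕ}

def Inv (A At : Matrix (Fin p) (Fin K) ℝ) (S St : Matrix (Fin K) (Fin K) ℝ)
    (T T' : Finset (Fin K)) (π : Fin K → Fin K) (ε : Fin K → ℝ) : Prop :=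
  T.card = T'.card ∧
  (∀ k, k ∉ T → π k ∉ T') ∧
  (∀ k k', k ∉ T → k' ∉ T → π k = π k' → k = k') ∧
  (∀ c, c ∉ T' → ∃ k, k ∉ T ∧ π k = c) ∧
  (∀ k, k ∉ T → (ε k = 1 ∨ ε k = -1)) ∧
  (∀ k, k ∉ T → St (π k) (π k) = S k k) ∧
  (∀ k, k ∉ T → ∀ j s, PureRow A j k s → PureRow At j (π k) (ε k * s)) ∧
  (∀ k, k ∉ T → ∀ j s, PureRow At j (π k) s → PureRow A j k (ε k * s))

variable {A At : Matrix (Fin p) (Fin K) ℝ} {S St : Matrix (Fin K) (Fin K) ℝ}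

lemma sign_eq_of_fix {e₂ e s : ℝ} (hs : s = 1 ∨ s = -1) (he : e = 1 ∨ e = -1)
    (he₂ : e₂ = 1 ∨ e₂ = -1) (h : s = e₂ * (e * s)) : e₂ = e := by
  rcases hs with h1 | h1 <;> rcases he with h2 | h2 <;> rcases he₂ with h3 | h3 <;>
    subst h1 <;> subst h2 <;> subst h3 <;> revert h <;> norm_num

lemma round (ν : ℝ) (hν : 0 < ν)
    (hS_sym : ∀ a b, S a b = S b a) (hSt_sym : ∀ a b, St a b = St b a)
    (hS_off : ∀ a b, a ≠ b → |S a b| ≤ min (S a a) (S b b) - ν)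
    (hSt_off : ∀ a b, a ≠ b → |St a b| ≤ min (St a a) (St b b) - ν)
    (hS_diag : ∀ a, 0 < S a a) (hSt_diag : ∀ a, 0 < St a a)
    (hA_l1 : ∀ j, ∑ c, |A j c| ≤ 1) (hAt_l1 : ∀ j, ∑ c, |At j c| ≤ 1)
    (hA_pure : ∀ k : Fin K, ∃ j l : Fin p, j ≠ l ∧ (∃ s, PureRow A j k s) ∧ (∃ s, PureRow A l k s))
    (hAt_pure : ∀ k : Fin K, ∃ j l : Fin p, j ≠ l ∧ (∃ s, PureRow At j k s) ∧ (∃ s, PureRow At l k s))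
    (hq : ∀ j l : Fin p, j ≠ l → bilin S (A j) (A l) = bilin St (At j) (At l))
    {T T' : Finset (Fin K)} {π : Fin K → Fin K} {ε : Fin K → ℝ}
    (hInv : Inv A At S St T T' π ε) (hTne : T.Nonempty) :
    ∃ k c e, k ∈ T ∧ c ∈ T' ∧ St c c = S k k ∧ (e = 1 ∨ e = -1) ∧
      (∀ j s, PureRow A j k s → PureRow At j c (e * s)) ∧
      (∀ j s, PureRow At j c s → PureRow A j k (e * s)) := by
  obtain ⟨hcard, hmap, hinj, hsurj, hsign, hdeq, htF, htB⟩ := hInv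
  -- the two `hM`-style facts
  have hMf : ∀ c, c ∉ T' → ∃ i : Fin p, ∃ k', k' ∉ T ∧
      (∃ s, PureRow A i k' s) ∧ (∃ s, PureRow At i c s) := by
    intro c hc
    obtain ⟨k', hk'T, hπ⟩ := hsurj c hc
    obtain ⟨j, _, _, ⟨s, hj⟩, _⟩ := hA_pure k'
    exact ⟨j, k', hk'T, ⟨s, hj⟩, ⟨ε k' * s, hπ ▸ htF k' hk'T j s hj⟩⟩
  have hMb : ∀ k', k' ∉ T → ∃ i : Fin p, ∃ c', c' ∉ T' ∧
      (∃ s, PureRow At i c' s) ∧ (∃ s, PureRow A i k' s) := by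
    intro k' hk'
    obtain ⟨j, _, _, ⟨s, hj⟩, _⟩ := hA_pure k'
    exact ⟨j, π k', hmap k' hk', ⟨ε k' * s, htF k' hk' j s hj⟩, ⟨s, hj⟩⟩
  have hq' : ∀ j l : Fin p, j ≠ l → bilin St (At j) (At l) = bilin S (A j) (A l) :=
    fun j l h => (hq j l h).symm
  have hT'ne : T'.Nonempty := by
    rw [← Finset.card_pos, ← hcard, Finset.card_pos]; exact hTne
  -- the maximum unmatched diagonal value
  set V : Finset ℝ := T.image (fun a => S a a) ∪ T'.image (fun c => St c c) with hV
  have hVne : V.Nonempty := by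
    refine Finset.Nonempty.mono Finset.subset_union_left ?_
    exact hTne.image _
  set μ := V.max' hVne with hμdef
  have hμT : ∀ a ∈ T, S a a ≤ μ := fun a ha =>
    Finset.le_max' V _ (Finset.mem_union_left _ (Finset.mem_image_of_mem _ ha))
  have hμT' : ∀ c ∈ T', St c c ≤ μ := fun c hc =>
    Finset.le_max' V _ (Finset.mem_union_right _ (Finset.mem_image_of_mem _ hc))
  have hμmem := V.max'_mem hVne
  rw [← hμdef] at hμmem
  rw [hV, Finset.mem_union] at hμmem
  rcases hμmem with hμA | hμB
  · -- μ attained on the A side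
    obtain ⟨k, hkT, hkk⟩ := Finset.mem_image.mp hμA
    have hμpos : 0 < μ := hkk ▸ hS_diag k
    obtain ⟨c, hcT', hStcc, e, he, transF⟩ :=
      step A At S St T T' ν μ hν hμpos hSt_sym hS_off hSt_off hSt_diag hAt_l1 hA_pure
        hq hMf k hkT hkk hμT'
    obtain ⟨k₀, hk₀T, hSk₀, e₂, he₂, transB⟩ :=
      step At A St S T' T ν μ hν hμpos hS_sym hSt_off hS_off hS_diag hA_l1 hAt_pure
        hq' hMb c hcT' hStcc hμT
    obtain ⟨j, _, _, ⟨s, hj⟩, _⟩ := hA_pure k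
    have h1 : PureRow At j c (e * s) := transF j s hj
    have h2 : PureRow A j k₀ (e₂ * (e * s)) := transB j (e * s) h1
    obtain ⟨hkeq, hseq⟩ := hj.col_eq h2
    have he₂e : e₂ = e := sign_eq_of_fix hj.1 he he₂ hseq
    refine ⟨k, c, e, hkT, hcT', by rw [hStcc, hkk], he, transF, ?_⟩
    intro j₂ s₂ hp
    have h3 := transB j₂ s₂ hp
    rw [← hkeq, he₂e] at h3
    exact h3
  · -- μ attained on the At side
    obtain ⟨c, hcT', hcc⟩ := Finset.mem_image.mp hμB
    have hμpos : 0 < μ := hcc ▸ hSt_diag c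
    obtain ⟨k, hkT, hSkk, e, he, transB⟩ :=
      step At A St S T' T ν μ hν hμpos hS_sym hSt_off hS_off hS_diag hA_l1 hAt_pure
        hq' hMb c hcT' hcc hμT
    obtain ⟨c₀, hc₀T', hStc₀, e₂, he₂, transF⟩ :=
      step A At S St T T' ν μ hν hμpos hSt_sym hS_off hSt_off hSt_diag hAt_l1 hA_pure
        hq hMf k hkT hSkk hμT'
    obtain ⟨i, _, _, ⟨t, hi⟩, _⟩ := hAt_pure c
    have h1 : PureRow A i k (e * t) := transB i t hi
    have h2 : PureRow At i c₀ (e₂ * (e * t)) := transF i (e * t) h1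
    obtain ⟨hceq, hteq⟩ := hi.col_eq h2
    have he₂e : e₂ = e := sign_eq_of_fix hi.1 he he₂ hteq
    refine ⟨k, c, e, hkT, hcT', by rw [hcc, hSkk], he, ?_, transB⟩
    intro j₂ s₂ hp
    have h3 := transF j₂ s₂ hp
    rw [← hceq, he₂e] at h3
    exact h3


lemma inv_update {A At : Matrix (Fin p) (Fin K) ℝ} {S St : Matrix (Fin K) (Fin K) ℝ}
    {T T' : Finset (Fin K)} {π : Fin K → Fin K} {ε : Fin K → ℝ} {k c : Fin K} {e : ℝ}
    (hInv : Inv A At S St T T' π ε) (hk : k ∈ T) (hc : c ∈ T')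
    (hd : St c c = S k k) (he : e = 1 ∨ e = -1)
    (transF : ∀ j s, PureRow A j k s → PureRow At j c (e * s))
    (transB : ∀ j s, PureRow At j c s → PureRow A j k (e * s)) :
    Inv A At S St (T.erase k) (T'.erase c) (Function.update π k c)
      (Function.update ε k e) := by
  obtain ⟨hcard, hmap, hinj, hsurj, hsign, hdeq, htF, htB⟩ := hInv
  have hmemT : ∀ k', k' ∉ T.erase k → k' ≠ k → k' ∉ T := by
    intro k' h1 h2 h3
    exact h1 (Finset.mem_erase.mpr ⟨h2, h3⟩)
  have hmemT' : ∀ c', c' ∉ T'.erase c → c' ≠ c → c' ∉ T' := by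
    intro c' h1 h2 h3
    exact h1 (Finset.mem_erase.mpr ⟨h2, h3⟩)
  refine ⟨?_, ?_, ?_, ?_, ?_, ?_, ?_, ?_⟩
  · rw [Finset.card_erase_of_mem hk, Finset.card_erase_of_mem hc, hcard]
  · intro k' hk'
    by_cases hkk : k' = k
    · subst hkk
      rw [Function.update_self]
      exact Finset.notMem_erase c T'
    · rw [Function.update_of_ne hkk]
      have := hmap k' (hmemT k' hk' hkk)
      intro hmem
      exact this (Finset.mem_of_mem_erase hmem)
  · intro k₁ k₂ h1 h2 heq
    by_cases ha : k₁ = k <;> by_cases hb : k₂ = k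
    · rw [ha, hb]
    · exfalso
      rw [ha, Function.update_self, Function.update_of_ne hb] at heq
      exact hmap k₂ (hmemT k₂ h2 hb) (heq ▸ hc)
    · exfalso
      rw [hb, Function.update_self, Function.update_of_ne ha] at heq
      exact hmap k₁ (hmemT k₁ h1 ha) (heq ▸ hc)
    · rw [Function.update_of_ne ha, Function.update_of_ne hb] at heq
      exact hinj k₁ k₂ (hmemT k₁ h1 ha) (hmemT k₂ h2 hb) heq
  · intro c' hc'
    by_cases hcc : c' = c
    · subst hcc
      exact ⟨k, Finset.notMem_erase k T, Function.update_self k c' π⟩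
    · obtain ⟨k₁, hk₁, hπ⟩ := hsurj c' (hmemT' c' hc' hcc)
      have hk₁k : k₁ ≠ k := fun h => hk₁ (h ▸ hk)
      refine ⟨k₁, fun h => hk₁ (Finset.mem_of_mem_erase h), ?_⟩
      rw [Function.update_of_ne hk₁k]
      exact hπ
  · intro k' hk'
    by_cases hkk : k' = k
    · subst hkk; rw [Function.update_self]; exact he
    · rw [Function.update_of_ne hkk]; exact hsign k' (hmemT k' hk' hkk)
  · intro k' hk'
    by_cases hkk : k' = k
    · subst hkk; rw [Function.update_self]; exact hd
    · rw [Function.update_of_ne hkk]; exact hdeq k' (hmemT k' hk' hkk)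
  · intro k' hk' j s hp
    by_cases hkk : k' = k
    · subst hkk
      rw [Function.update_self, Function.update_self]
      exact transF j s hp
    · rw [Function.update_of_ne hkk, Function.update_of_ne hkk]
      exact htF k' (hmemT k' hk' hkk) j s hp
  · intro k' hk' j s hp
    by_cases hkk : k' = k
    · subst hkk
      rw [Function.update_self] at hp ⊢
      exact transB j s hp
    · rw [Function.update_of_ne hkk] at hp ⊢
      exact htB k' (hmemT k' hk' hkk) j s hp

lemma build {A At : Matrix (Fin p) (Fin K) ℝ} {S St : Matrix (Fin K) (Fin K) ℝ}
    (ν : ℝ) (hν : 0 < ν)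
    (hS_sym : ∀ a b, S a b = S b a) (hSt_sym : ∀ a b, St a b = St b a)
    (hS_off : ∀ a b, a ≠ b → |S a b| ≤ min (S a a) (S b b) - ν)
    (hSt_off : ∀ a b, a ≠ b → |St a b| ≤ min (St a a) (St b b) - ν)
    (hS_diag : ∀ a, 0 < S a a) (hSt_diag : ∀ a, 0 < St a a)
    (hA_l1 : ∀ j, ∑ c, |A j c| ≤ 1) (hAt_l1 : ∀ j, ∑ c, |At j c| ≤ 1)
    (hA_pure : ∀ k : Fin K, ∃ j l : Fin p, j ≠ l ∧ (∃ s, PureRow A j k s) ∧ (∃ s, PureRow A l k s))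
    (hAt_pure : ∀ k : Fin K, ∃ j l : Fin p, j ≠ l ∧ (∃ s, PureRow At j k s) ∧ (∃ s, PureRow At l k s))
    (hq : ∀ j l : Fin p, j ≠ l → bilin S (A j) (A l) = bilin St (At j) (At l)) :
    ∀ (n : ℕ) (T T' : Finset (Fin K)) (π : Fin K → Fin K) (ε : Fin K → ℝ),
      T.card = n → Inv A At S St T T' π ε →
      ∃ π' ε', Inv A At S St ∅ ∅ π' ε' := by
  intro n
  induction n with
  | zero =>
    intro T T' π ε hT hInv
    have hT0 : T = ∅ := Finset.card_eq_zero.mp hT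
    have hT'0 : T' = ∅ := Finset.card_eq_zero.mp (by rw [← hInv.1, hT])
    subst hT0; subst hT'0
    exact ⟨π, ε, hInv⟩
  | succ n ih =>
    intro T T' π ε hT hInv
    have hTne : T.Nonempty := Finset.card_pos.mp (by omega)
    obtain ⟨k, c, e, hkT, hcT', hd, he, transF, transB⟩ :=
      round ν hν hS_sym hSt_sym hS_off hSt_off hS_diag hSt_diag hA_l1 hAt_l1
        hA_pure hAt_pure hq hInv hTne
    refine ih (T.erase k) (T'.erase c) (Function.update π k c) (Function.update ε k e)
      ?_ (inv_update hInv hkT hcT' hd he transF transB)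
    rw [Finset.card_erase_of_mem hkT, hT]
    rfl

lemma posdef_diag_pos {S : Matrix (Fin K) (Fin K) ℝ} (h : S.PosDef) (a : Fin K) :
    0 < S a a := by
  have h1 := h.dotProduct_mulVec_pos (x := Pi.single a 1) (by
    intro hh
    simpa using congrFun hh a)
  have h2 : star (Pi.single a (1:ℝ)) ⬝ᵥ (S *ᵥ Pi.single a 1) = S a a := by
    simp [dotProduct, Matrix.mulVec, Pi.single_apply, mul_ite, ite_mul]
  rwa [h2] at h1

lemma posdef_cancel {S : Matrix (Fin K) (Fin K) ℝ} (h : S.PosDef) {x y : Fin K → ℝ}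
    (hxy : ∀ k, ∑ b, S k b * x b = ∑ b, S k b * y b) : x = y := by
  by_contra hne
  have hv : x - y ≠ 0 := fun hh => hne (sub_eq_zero.mp hh)
  have h2 := h.dotProduct_mulVec_pos hv
  have h3 : S *ᵥ (x - y) = 0 := by
    funext k
    have h4 := hxy k
    simp only [Matrix.mulVec, dotProduct, Pi.sub_apply, Pi.zero_apply, mul_sub]
    rw [Finset.sum_sub_distrib]
    linarith
  rw [h3] at h2
  simp at h2

lemma sym_of_pd {S : Matrix (Fin K) (Fin K) ℝ} (h : S.PosDef) : ∀ a b, S a b = S b a := by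
  intro a b
  have h1 := h.1
  conv_lhs => rw [← h1]
  simp [Matrix.conjTranspose_apply]

lemma off_diag_bound {S : Matrix (Fin K) (Fin K) ℝ} (hsym : ∀ a b, S a b = S b a)
    {ν₁ ν : ℝ} (hle : ν ≤ ν₁)
    (hsep : ∀ a b : Fin K, a < b → min (S a a) (S b b) - |S a b| > ν₁) :
    ∀ a b, a ≠ b → |S a b| ≤ min (S a a) (S b b) - ν := by
  intro a b hab
  rcases lt_or_gt_of_ne hab with h | h
  · have := hsep a b h; linarith
  · have := hsep b a h
    rw [hsym a b, min_comm (S a a) (S b b)]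
    linarith

lemma assumption_pure {A : Matrix (Fin p) (Fin K) ℝ}
    (h : ∀ k : Fin K, ∃ j l : Fin p, j ≠ l ∧
      (∀ a, |A j a| = if a = k then 1 else 0) ∧
      (∀ a, |A l a| = if a = k then 1 else 0)) :
    ∀ k : Fin K, ∃ j l : Fin p, j ≠ l ∧ (∃ s, PureRow A j k s) ∧ (∃ s, PureRow A l k s) := by
  intro k
  obtain ⟨j, l, hjl, hj, hl⟩ := h k
  exact ⟨j, l, hjl, pureRow_of_abs hj, pureRow_of_abs hl⟩

lemma sign_solve {s s' u v X Y : ℝ} (hs : s = 1 ∨ s = -1) (hs' : s' = 1 ∨ s' = -1)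
    (hu : u = 1 ∨ u = -1) (hv : v = 1 ∨ v = -1)
    (h : s * s' * X = (u * s) * (v * s') * Y) : Y = u * v * X := by
  rcases hs with h1 | h1 <;> rcases hs' with h2 | h2 <;> rcases hu with h3 | h3 <;>
    rcases hv with h4 | h4 <;> subst h1 <;> subst h2 <;> subst h3 <;> subst h4 <;>
    norm_num at h ⊢ <;> linarith

lemma quad_apply (A : Matrix (Fin p) (Fin K) ℝ) (S : Matrix (Fin K) (Fin K) ℝ)
    (j l : Fin p) : (A * S * Aᵀ) j l = bilin S (A j) (A l) := by
  simp only [Matrix.mul_apply, Matrix.transpose_apply, Finset.sum_mul, bilin]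
  rw [Finset.sum_comm]

lemma inv_init {A At : Matrix (Fin p) (Fin K) ℝ} {S St : Matrix (Fin K) (Fin K) ℝ} :
    Inv A At S St Finset.univ Finset.univ id (fun _ => 1) :=
  ⟨rfl, fun k hk => absurd (Finset.mem_univ k) hk,
    fun k _ hk => absurd (Finset.mem_univ k) hk,
    fun c hc => absurd (Finset.mem_univ c) hc,
    fun k hk => absurd (Finset.mem_univ k) hk,
    fun k hk => absurd (Finset.mem_univ k) hk,
    fun k hk => absurd (Finset.mem_univ k) hk,
    fun k hk => absurd (Finset.mem_univ k) hk⟩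

lemma mulVec_pure {A : Matrix (Fin p) (Fin K) ℝ} {S : Matrix (Fin K) (Fin K) ℝ}
    {β : Fin K → ℝ} {j : Fin p} {k : Fin K} {s : ℝ} (hj : PureRow A j k s) :
    ((A * S).mulVec β) j = s * ∑ c, S k c * β c := by
  have h1 : ∀ c, (∑ a, A j a * S a c) = s * S k c := by
    intro c
    rw [Finset.sum_eq_single k]
    · rw [hj.2 k, if_pos rfl]
    · intro b _ hb; rw [hj.2 b, if_neg hb, zero_mul]
    · intro hmem; exact absurd (Finset.mem_univ k) hmem
  simp only [Matrix.mulVec, dotProduct, Matrix.mul_apply, h1]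
  rw [Finset.mul_sum]
  refine Finset.sum_congr rfl fun c _ => by ring

end IdProof

open IdProof

/-- Proposition 1: identifiability of the regression coefficient `β` (together with `A`
and `Σ_Z`) from the covariance quantities `A Σ_Z Aᵀ + Γ` and `A Σ_Z β`, up to a signed
permutation. -/
theorem identifiability_of_beta {p K : ℕ}
    (A At : Matrix (Fin p) (Fin K) ℝ)
    (S St : Matrix (Fin K) (Fin K) ℝ)
    (Γ Γt : Matrix (Fin p) (Fin p) ℝ)
    (β βt : Fin K → ℝ)
    (hA : Assumption1 A S) (hAt : Assumption1 At St)
    (hΓdiag : Γ.IsDiag) (hΓ : Γ.PosSemidef)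
    (hΓtdiag : Γt.IsDiag) (hΓt : Γt.PosSemidef)
    (hSig : A * S * Aᵀ + Γ = At * St * Atᵀ + Γt)
    (hXY : (A * S).mulVec β = (At * St).mulVec βt) :
    ∃ P : Matrix (Fin K) (Fin K) ℝ, IsSignedPermMatrix P ∧
      At = A * P ∧ St = Pᵀ * S * P ∧ βt = Pᵀ.mulVec β := by
  obtain ⟨hA_l1, hA_pabs, hS_pd, ν₁, hν₁, hsep₁⟩ := hA
  obtain ⟨hAt_l1, hAt_pabs, hSt_pd, ν₂, hν₂, hsep₂⟩ := hAt
  set ν : ℝ := min ν₁ ν₂ with hνdef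
  have hν : 0 < ν := lt_min hν₁ hν₂
  have hS_sym := sym_of_pd hS_pd
  have hSt_sym := sym_of_pd hSt_pd
  have hS_off := off_diag_bound hS_sym (min_le_left ν₁ ν₂) hsep₁
  have hSt_off := off_diag_bound hSt_sym (min_le_right ν₁ ν₂) hsep₂
  have hS_diag := posdef_diag_pos hS_pd
  have hSt_diag := posdef_diag_pos hSt_pd
  have hA_pure := assumption_pure hA_pabs
  have hAt_pure := assumption_pure hAt_pabs
  have hq : ∀ j l : Fin p, j ≠ l → bilin S (A j) (A l) = bilin St (At j) (At l) := by
    intro j l hjl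
    have h1 := congrFun (congrFun hSig j) l
    simp only [Matrix.add_apply] at h1
    rw [hΓdiag hjl, hΓtdiag hjl, quad_apply, quad_apply] at h1
    linarith
  obtain ⟨π, ε, hInv⟩ := build ν hν hS_sym hSt_sym hS_off hSt_off hS_diag hSt_diag
    hA_l1 hAt_l1 hA_pure hAt_pure hq K Finset.univ Finset.univ id (fun _ => 1)
    (by simp) inv_init
  obtain ⟨-, -, hinj, hsurj, hsign, hdeq, htF, htB⟩ := hInv
  have hinj' : Function.Injective π := fun a b h =>
    hinj a b (Finset.notMem_empty a) (Finset.notMem_empty b) h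
  have hsurj' : Function.Surjective π := fun c => by
    obtain ⟨k, -, hk⟩ := hsurj c (Finset.notMem_empty c)
    exact ⟨k, hk⟩
  have hbij : Function.Bijective π := ⟨hinj', hsurj'⟩
  have hsign' : ∀ k, ε k = 1 ∨ ε k = -1 := fun k => hsign k (Finset.notMem_empty k)
  have hee : ∀ k, ε k * ε k = 1 := fun k => sign_mul_self (hsign' k)
  have hεne : ∀ k, ε k ≠ 0 := fun k => sign_ne_zero (hsign' k)
  have htF' : ∀ k j s, PureRow A j k s → PureRow At j (π k) (ε k * s) :=
    fun k => htF k (Finset.notMem_empty k)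
  -- the transported entries of St
  have hStππ : ∀ k k', St (π k) (π k') = ε k * ε k' * S k k' := by
    intro k k'
    by_cases hkk : k = k'
    · subst hkk
      rw [hee k, one_mul, hdeq k (Finset.notMem_empty k)]
    · obtain ⟨j, -, -, ⟨s, hj⟩, -⟩ := hA_pure k
      obtain ⟨l, -, -, ⟨s', hl⟩, -⟩ := hA_pure k'
      have hjl : j ≠ l := fun h => hkk ((hj.col_eq (h ▸ hl)).1)
      have h1 := hq j l hjl
      rw [bilin_pure_pure hj hl, bilin_pure_pure (htF' k j s hj) (htF' k' l s' hl)] at h1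
      exact sign_solve hj.1 hl.1 (hsign' k) (hsign' k') h1
  -- the row identity A j b = ε b * At j (π b)
  have hrowS : ∀ j k, (∑ b, S k b * A j b) = ε k * ∑ c, St (π k) c * At j c := by
    intro j k
    by_cases hp : ∃ s, PureRow A j k s
    · obtain ⟨s, hj⟩ := hp
      have hjt := htF' k j s hj
      have e1 : (∑ b, S k b * A j b) = S k k * s := by
        rw [Finset.sum_eq_single k]
        · rw [hj.2 k, if_pos rfl]
        · intro b _ hb; rw [hj.2 b, if_neg hb, mul_zero]
        · intro hmem; exact absurd (Finset.mem_univ k) hmem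
      have e2 : (∑ c, St (π k) c * At j c) = St (π k) (π k) * (ε k * s) := by
        rw [Finset.sum_eq_single (π k)]
        · rw [hjt.2 (π k), if_pos rfl]
        · intro b _ hb; rw [hjt.2 b, if_neg hb, mul_zero]
        · intro hmem; exact absurd (Finset.mem_univ (π k)) hmem
      rw [e1, e2, hdeq k (Finset.notMem_empty k)]
      linear_combination (-(S k k * s)) * hee k
    · obtain ⟨i, -, -, ⟨s, hi⟩, -⟩ := hA_pure k
      have hij : i ≠ j := fun h => hp ⟨s, h ▸ hi⟩
      have h1 := hq i j hij
      rw [bilin_pure_left hi, bilin_pure_left (htF' k i s hi)] at h1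
      have h2 : s * (∑ b, S k b * A j b) =
          s * (ε k * ∑ c, St (π k) c * At j c) := by rw [h1]; ring
      exact mul_left_cancel₀ (sign_ne_zero hi.1) h2
  have hrow : ∀ j b, A j b = ε b * At j (π b) := by
    intro j
    have hfun : A j = fun b => ε b * At j (π b) := by
      apply posdef_cancel hS_pd
      intro k
      have hre : (∑ c, St (π k) c * At j c) = ∑ b, St (π k) (π b) * At j (π b) :=
        (Function.Bijective.sum_comp hbij _).symm
      rw [hrowS j k, hre, Finset.mul_sum]
      refine Finset.sum_congr rfl fun b _ => ?_
      rw [hStππ k b]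
      linear_combination (S k b * ε b * At j (π b)) * hee k
    exact fun b => congrFun hfun b
  -- the signed permutation matrix
  refine ⟨Matrix.of fun k c => if c = π k then ε k else 0, ?_, ?_, ?_, ?_⟩
  · refine ⟨?_, ?_, ?_⟩
    · intro k
      refine ⟨π k, by simp [hεne k], ?_⟩
      intro c hc
      by_contra hne
      simp only [Matrix.of_apply, if_neg hne] at hc
      exact hc rfl
    · intro c
      obtain ⟨k₀, hk₀⟩ := hsurj' c
      refine ⟨k₀, by simp [hk₀.symm, hεne k₀], ?_⟩
      intro k hk
      by_cases hc : c = π k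
      · exact hinj' (hk₀.trans hc).symm
      · simp only [Matrix.of_apply, if_neg hc] at hk
        exact absurd rfl hk
    · intro k c hkc
      by_cases hc : c = π k
      · simp only [Matrix.of_apply, if_pos hc]
        exact hsign' k
      · simp only [Matrix.of_apply, if_neg hc] at hkc
        exact absurd rfl hkc
  · -- At = A * P
    apply Matrix.ext
    intro j c
    obtain ⟨k₀, hk₀⟩ := hsurj' c
    rw [Matrix.mul_apply, Finset.sum_eq_single k₀]
    · rw [Matrix.of_apply, if_pos hk₀.symm, hrow j k₀, hk₀]
      linear_combination (-(At j c)) * hee k₀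
    · intro b _ hb
      have hc : c ≠ π b := fun h => hb (hinj' (hk₀.trans h)).symm
      rw [Matrix.of_apply, if_neg hc, mul_zero]
    · intro hmem; exact absurd (Finset.mem_univ k₀) hmem
  · -- St = Pᵀ * S * P
    apply Matrix.ext
    intro c c'
    obtain ⟨k₀, hk₀⟩ := hsurj' c
    obtain ⟨k₁, hk₁⟩ := hsurj' c'
    rw [Matrix.mul_apply, Finset.sum_eq_single k₁]
    · rw [Matrix.mul_apply, Finset.sum_eq_single k₀]
      · rw [Matrix.transpose_apply, Matrix.of_apply, if_pos hk₀.symm,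
          Matrix.of_apply, if_pos hk₁.symm, ← hk₀, ← hk₁, hStππ]
        ring
      · intro b _ hb
        have hc : c ≠ π b := fun h => hb (hinj' (hk₀.trans h)).symm
        rw [Matrix.transpose_apply, Matrix.of_apply, if_neg hc, zero_mul]
      · intro hmem; exact absurd (Finset.mem_univ k₀) hmem
    · intro b _ hb
      have hc : c' ≠ π b := fun h => hb (hinj' (hk₁.trans h)).symm
      rw [Matrix.of_apply, if_neg hc, mul_zero]
    · intro hmem; exact absurd (Finset.mem_univ k₁) hmem
  · -- βt = Pᵀ.mulVec β
    have hXYk : ∀ k, (∑ c, S k c * β c) = ε k * ∑ c, St (π k) c * βt c := by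
      intro k
      obtain ⟨j, -, -, ⟨s, hj⟩, -⟩ := hA_pure k
      have h1 : ((A * S).mulVec β) j = s * ∑ c, S k c * β c := mulVec_pure hj
      have h2 : ((At * St).mulVec βt) j = (ε k * s) * ∑ c, St (π k) c * βt c :=
        mulVec_pure (htF' k j s hj)
      have h3 := congrFun hXY j
      rw [h1, h2] at h3
      have h4 : s * (∑ c, S k c * β c) =
          s * (ε k * ∑ c, St (π k) c * βt c) := by rw [h3]; ring
      exact mul_left_cancel₀ (sign_ne_zero hj.1) h4
    have hβ : β = fun b => ε b * βt (π b) := by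
      apply posdef_cancel hS_pd
      intro k
      have hre : (∑ c, St (π k) c * βt c) = ∑ b, St (π k) (π b) * βt (π b) :=
        (Function.Bijective.sum_comp hbij _).symm
      rw [hXYk k, hre, Finset.mul_sum]
      refine Finset.sum_congr rfl fun b _ => ?_
      rw [hStππ k b]
      linear_combination (S k b * ε b * βt (π b)) * hee k
    funext c
    obtain ⟨k₀, hk₀⟩ := hsurj' c
    have h5 : (Matrix.of fun k c => if c = π k then ε k else 0)ᵀ.mulVec β c =
        ∑ k, (if c = π k then ε k else 0) * β k := by
      simp only [Matrix.mulVec, dotProduct, Matrix.transpose_apply, Matrix.of_apply]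
    rw [h5, Finset.sum_eq_single k₀]
    · rw [if_pos hk₀.symm, congrFun hβ k₀]
      simp only [hk₀]
      linear_combination (-(βt c)) * hee k₀
    · intro b _ hb
      have hc : c ≠ π b := fun h => hb (hinj' (hk₀.trans h)).symm
      rw [if_neg hc, zero_mul]
    · intro hmem; exact absurd (Finset.mem_univ k₀) hmem
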